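/- arXiv:2005.12673 — 4 statements merged into one kernel-verified Lean document; each statement's English description precedes it below -/
import Mathlib

section
/- Let F be a field, E an elliptic curve over F, d a positive integer, and P, Q two distinct F-rational points of E such that (3d−1)•P + Q = 0 and P + (3d−1)•Q = 0. Then (3d(3d−2))•P = 0, (3d(3d−2))•Q = 0, and (3d)•P ≠ 0; in particular the additive order of P divides 3d(3d−2) but does not divide 3d, and necessarily d ≥ 2. -/
lemma aux_key {G : Type*} [AddCommGroup G] (d : ℕ) (hd : 0 < d) (P Q : G)
    (h1 : (3 * d - 1) • P + Q = 0) (h2 : P + (3 * d - 1) • Q = 0) :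
    (3 * d * (3 * d - 2)) • P = 0 := by
  have hc : ((3 * d - 1 : ℕ) : ℤ) = 3 * d - 1 := by
    push_cast [Nat.cast_sub (by omega : 1 ≤ 3 * d)]; ring
  have hc2 : ((3 * d * (3 * d - 2) : ℕ) : ℤ) = 3 * d * (3 * d - 2) := by
    push_cast [Nat.cast_sub (by omega : 2 ≤ 3 * d)]; ring
  rw [← natCast_zsmul, hc] at h1 h2
  rw [← natCast_zsmul, hc2]
  have hQ : Q = -(((3 : ℤ) * d - 1) • P) := eq_neg_of_add_eq_zero_right h1
  rw [hQ, smul_neg, smul_smul, ← sub_eq_add_neg] at h2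
  have h3 : (((3 : ℤ) * d - 1) * (3 * d - 1) - 1) • P = 0 := by
    rw [sub_smul, one_smul, sub_eq_zero]
    exact (sub_eq_zero.mp h2).symm
  have : ((3 : ℤ) * d * (3 * d - 2)) = ((3 : ℤ) * d - 1) * (3 * d - 1) - 1 := by ring
  rw [this]; exact h3

open scoped Classical in
/-- If `P ≠ Q` are points on an elliptic curve with `(3d-1) • P + Q = 0` and
`P + (3d-1) • Q = 0` for a positive integer `d`, then `(3d(3d-2)) • P = 0`,
`(3d(3d-2)) • Q = 0`, `(3d) • P ≠ 0`; in particular `addOrderOf P ∣ 3d(3d-2)`,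
`¬ addOrderOf P ∣ 3d`, and `d ≥ 2`. -/
theorem stmt_6 {F : Type*} [Field F] (W : WeierstrassCurve F) [W.IsElliptic]
    (d : ℕ) (hd : 0 < d) (P Q : W.toAffine.Point) (hPQ : P ≠ Q)
    (h1 : (3 * d - 1) • P + Q = 0) (h2 : P + (3 * d - 1) • Q = 0) :
    (3 * d * (3 * d - 2)) • P = 0 ∧ (3 * d * (3 * d - 2)) • Q = 0 ∧
      (3 * d) • P ≠ 0 ∧
      addOrderOf P ∣ 3 * d * (3 * d - 2) ∧ ¬ addOrderOf P ∣ 3 * d ∧ 2 ≤ d := by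
  have hP0 := aux_key d hd P Q h1 h2
  have hQ0 := aux_key d hd Q P (by rw [add_comm]; exact h2) (by rw [add_comm]; exact h1)
  have hne : (3 * d) • P ≠ 0 := by
    intro h
    have hs : (3 * d - 1) • P = -P := by
      have : (3 * d - 1) • P + P = 0 := by
        rw [← succ_nsmul]
        have : 3 * d - 1 + 1 = 3 * d := by omega
        rw [this]; exact h
      exact eq_neg_of_add_eq_zero_left this
    rw [hs, neg_add_eq_zero] at h1
    exact hPQ h1
  refine ⟨hP0, hQ0, hne, addOrderOf_dvd_of_nsmul_eq_zero hP0, ?_, ?_⟩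
  · intro h
    exact hne (addOrderOf_dvd_iff_nsmul_eq_zero.mp h)
  · by_contra h
    have hd1 : d = 1 := by omega
    subst hd1
    exact hne (by norm_num at hP0 ⊢; exact hP0)
end

section
/- Let F be a field, E an elliptic curve over F, and P, Q two distinct F-rational points of E such that 8•P + Q = 0 and P + 8•Q = 0. Then the additive order of P belongs to {7, 21, 63}, and the additive order of P + Q equals (addOrderOf P) / gcd(addOrderOf P, 7); in particular it is 1, 3 or 9 according as the additive order of P is 7, 21 or 63. -/
open Classical in
/-- If `P ≠ Q` are points on an elliptic curve with `8 • P + Q = 0` and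
`P + 8 • Q = 0`, then `addOrderOf P ∈ {7, 21, 63}` and
`addOrderOf (P + Q) = addOrderOf P / gcd (addOrderOf P) 7`; in particular it is `1`, `3`
or `9` according as `addOrderOf P` is `7`, `21` or `63`. -/
theorem stmt_10 {F : Type*} [Field F] (W : WeierstrassCurve F) [W.IsElliptic]
    (P Q : W.toAffine.Point) (hPQ : P ≠ Q)
    (h1 : 8 • P + Q = 0) (h2 : P + 8 • Q = 0) :
    addOrderOf P ∈ ({7, 21, 63} : Set ℕ) ∧
      addOrderOf (P + Q) = addOrderOf P / Nat.gcd (addOrderOf P) 7 ∧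
      (addOrderOf P = 7 → addOrderOf (P + Q) = 1) ∧
      (addOrderOf P = 21 → addOrderOf (P + Q) = 3) ∧
      (addOrderOf P = 63 → addOrderOf (P + Q) = 9) := by
  have hQ : Q = -(8 • P) := by
    rw [eq_neg_iff_add_eq_zero, add_comm]; exact h1
  rw [hQ] at h2
  have h63 : (63 : ℕ) • P = 0 := by
    have h' : (63 : ℕ) • P = -(P + (8 : ℕ) • -((8 : ℕ) • P)) := by abel
    rw [h', h2, neg_zero]
  have hd : addOrderOf P ∣ 63 := addOrderOf_dvd_of_nsmul_eq_zero h63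
  have h9 : (9 : ℕ) • P ≠ 0 := by
    intro h9'
    apply hPQ
    rw [hQ, show -((8 : ℕ) • P) = P - (9 : ℕ) • P by abel, h9', sub_zero]
  have hnd : ¬ addOrderOf P ∣ 9 := fun h => h9 (addOrderOf_dvd_iff_nsmul_eq_zero.mp h)
  have hmem : addOrderOf P ∈ Nat.divisors 63 := Nat.mem_divisors.mpr ⟨hd, by norm_num⟩
  have hdiv : Nat.divisors 63 = {1, 3, 7, 9, 21, 63} := by decide
  rw [hdiv] at hmem
  simp only [Finset.mem_insert, Finset.mem_singleton] at hmem
  have hPQeq : P + Q = -((7 : ℕ) • P) := by rw [hQ]; abel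
  have hord : addOrderOf (P + Q) = addOrderOf P / Nat.gcd (addOrderOf P) 7 := by
    rw [hPQeq, addOrderOf_neg, addOrderOf_nsmul' P (by norm_num : (7:ℕ) ≠ 0)]
  rcases hmem with h | h | h | h | h | h
  · rw [h] at hnd; exact absurd (by norm_num) hnd
  · rw [h] at hnd; exact absurd (by norm_num) hnd
  · rw [h] at hord ⊢
    exact ⟨by norm_num, hord, fun _ => by simpa using hord,
      fun hc => by norm_num at hc, fun hc => by norm_num at hc⟩
  · rw [h] at hnd; exact absurd (by norm_num) hnd
  · rw [h] at hord ⊢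
    exact ⟨by norm_num, hord, fun hc => by norm_num at hc,
      fun _ => by simpa using hord, fun hc => by norm_num at hc⟩
  · rw [h] at hord ⊢
    exact ⟨by norm_num, hord, fun hc => by norm_num at hc,
      fun hc => by norm_num at hc, fun _ => by simpa using hord⟩
end

section
/- Let a₁, …, a_k be integers with gcd(a₁, …, a_k) = 1 and let m₁, …, m_k, d₁, …, d_k be positive integers. Set n_a := gcd(a₁·m₁, …, a_k·m_k, Σ_j a_j·d_j) and assume n_a ≥ 2. Set b′_j := a_j − n_a·⌊a_j/n_a⌋, κ := gcd(b′₁, …, b′_k), b_j := b′_j/κ, and n_b := gcd(b₁·m₁, …, b_k·m_k, Σ_j b_j·d_j). Then n_a divides n_b. -/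
/-- With `gcd (a₁, …, a_k) = 1`, `m_j, d_j` positive,
`n_a := gcd (a_jm_j, Σ a_jd_j) ≥ 2`, `b'_j := a_j - n_a·⌊a_j/n_a⌋`,
`κ := gcd (b'_j)`, `b_j := b'_j/κ` and `n_b := gcd (b_jm_j, Σ b_jd_j)`,
one has `n_a ∣ n_b`. -/
theorem stmt_13 (k : ℕ) (hk : 0 < k) (a : Fin k → ℤ)
    (ha : Finset.univ.gcd a = 1)
    (m d : Fin k → ℕ) (hm : ∀ j, 0 < m j) (hd : ∀ j, 0 < d j)
    (na : ℕ)
    (hna : na = Int.gcd (Finset.univ.gcd fun j => a j * (m j : ℤ))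
      (∑ j, a j * (d j : ℤ)))
    (hna2 : 2 ≤ na)
    (b' : Fin k → ℤ) (hb' : ∀ j, b' j = a j - (na : ℤ) * (a j / (na : ℤ)))
    (κ : ℤ) (hκ : κ = Finset.univ.gcd b')
    (b : Fin k → ℤ) (hb : ∀ j, b j = b' j / κ)
    (nb : ℕ)
    (hnb : nb = Int.gcd (Finset.univ.gcd fun j => b j * (m j : ℤ))
      (∑ j, b j * (d j : ℤ))) :
    na ∣ nb := by
  -- na divides each a j * m j and the sum Σ a j * d j
  have hdvd1 : ∀ j, (na : ℤ) ∣ a j * (m j : ℤ) := by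
    intro j
    have h1 : (na : ℤ) ∣ Finset.univ.gcd fun j => a j * (m j : ℤ) := by
      rw [hna]; exact Int.gcd_dvd_left _ _
    exact h1.trans (Finset.gcd_dvd (Finset.mem_univ j))
  have hdvd2 : (na : ℤ) ∣ ∑ j, a j * (d j : ℤ) := by
    rw [hna]; exact Int.gcd_dvd_right _ _
  -- na divides a j - b' j
  have hab : ∀ j, (na : ℤ) ∣ a j - b' j := by
    intro j
    rw [hb' j]
    exact ⟨a j / (na : ℤ), by ring⟩
  -- κ divides each b' j
  have hκb' : ∀ j, κ ∣ b' j := by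
    intro j
    rw [hκ]; exact Finset.gcd_dvd (Finset.mem_univ j)
  -- b' j = κ * b j
  have hbb' : ∀ j, b' j = κ * b j := fun j => by
    rw [hb j, Int.mul_ediv_cancel' (hκb' j)]
  -- coprimality of na and κ
  have hcop : IsCoprime (na : ℤ) κ := by
    rw [Int.isCoprime_iff_gcd_eq_one]
    have hgdvd : (Int.gcd (na : ℤ) κ : ℤ) ∣ 1 := by
      rw [← ha]
      apply Finset.dvd_gcd
      intro j _
      have h1 : (Int.gcd (na : ℤ) κ : ℤ) ∣ a j - b' j :=
        dvd_trans (Int.gcd_dvd_left _ _) (hab j)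
      have h2 : (Int.gcd (na : ℤ) κ : ℤ) ∣ b' j :=
        dvd_trans (Int.gcd_dvd_right _ _) (hκb' j)
      have := dvd_add h1 h2
      simpa using this
    have : (Int.gcd (na : ℤ) κ) ∣ 1 := by exact_mod_cast hgdvd
    exact Nat.dvd_one.mp this
  -- na divides b' j * m j and Σ b' j d j
  have hdvdb'1 : ∀ j, (na : ℤ) ∣ b' j * (m j : ℤ) := by
    intro j
    have : b' j * (m j : ℤ) = a j * (m j : ℤ) - (a j - b' j) * (m j : ℤ) := by ring
    rw [this]
    exact dvd_sub (hdvd1 j) (Dvd.dvd.mul_right (hab j) _)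
  have hdvdb'2 : (na : ℤ) ∣ ∑ j, b' j * (d j : ℤ) := by
    have : (∑ j, b' j * (d j : ℤ)) =
        (∑ j, a j * (d j : ℤ)) - ∑ j, (a j - b' j) * (d j : ℤ) := by
      rw [← Finset.sum_sub_distrib]; congr 1; ext j; ring
    rw [this]
    exact dvd_sub hdvd2 (Finset.dvd_sum fun j _ => Dvd.dvd.mul_right (hab j) _)
  -- hence na divides b j * m j and Σ b j d j, using coprimality
  have hdvdb1 : ∀ j, (na : ℤ) ∣ b j * (m j : ℤ) := by
    intro j
    apply hcop.dvd_of_dvd_mul_left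
    have := hdvdb'1 j
    rw [hbb' j, mul_assoc] at this
    exact this
  have hdvdb2 : (na : ℤ) ∣ ∑ j, b j * (d j : ℤ) := by
    apply hcop.dvd_of_dvd_mul_left
    have := hdvdb'2
    simp only [hbb'] at this
    have heq : (∑ x : Fin k, κ * b x * (d x : ℤ)) = κ * ∑ j, b j * (d j : ℤ) := by
      rw [Finset.mul_sum]; exact Finset.sum_congr rfl fun j _ => by ring
    rwa [heq] at this
  have hfin : (na : ℤ) ∣ (nb : ℤ) := by
    rw [hnb]
    exact Int.dvd_coe_gcd (Finset.dvd_gcd fun j _ => hdvdb1 j) hdvdb2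
  exact_mod_cast hfin
end

section
/- Let a₁, …, a_k be integers with gcd(a₁, …, a_k) = 1, let m₁, …, m_k, d₁, …, d_k be positive integers, set n_a := gcd(a₁·m₁, …, a_k·m_k, Σ_j a_j·d_j) and assume n_a ≥ 2; set b′_j := a_j − n_a·⌊a_j/n_a⌋, κ := gcd(b′₁, …, b′_k), b_j := b′_j/κ, and n_b := gcd(b₁·m₁, …, b_k·m_k, Σ_j b_j·d_j). Let A be an additive commutative group and t₁, …, t_k ∈ A with m_j • t_j = 0 for every j. Then Σ_{j=1}^k ((a_j·m_j)/n_a) • t_j = ((κ·n_b)/n_a) • ( Σ_{j=1}^k ((b_j·m_j)/n_b) • t_j ). -/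
private lemma aux_dvd_mul_gcd {n κ x y : ℤ} (hx : n ∣ κ * x) (hy : n ∣ κ * y) :
    n ∣ κ * gcd x y := by
  rw [← Int.coe_gcd, Int.gcd_eq_gcd_ab x y, mul_add, ← mul_assoc, ← mul_assoc]
  exact dvd_add (hx.mul_right _) (hy.mul_right _)

private lemma aux_finset_dvd {ι : Type*} [DecidableEq ι] (s : Finset ι) (n κ : ℤ) (f : ι → ℤ)
    (h : ∀ j ∈ s, n ∣ κ * f j) : n ∣ κ * s.gcd f := by
  induction s using Finset.induction with
  | empty => simp
  | insert _ _ hi ih =>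
    rw [Finset.gcd_insert]
    exact aux_dvd_mul_gcd (h _ (Finset.mem_insert_self _ _))
      (ih fun j hj => h j (Finset.mem_insert_of_mem hj))

/-- With the notation of Lemma 2.8(ii) of the paper: `gcd (a) = 1`, `m_j, d_j`
positive, `n_a := gcd (a_jm_j, Σ a_jd_j) ≥ 2`, `b'_j` the residues of `a_j` mod `n_a`,
`κ := gcd (b'_j)`, `b_j := b'_j/κ`, `n_b := gcd (b_jm_j, Σ b_jd_j)`, and `t_j` elements of an
additive commutative group with `m_j • t_j = 0`, one has
`Σ_j ((a_jm_j)/n_a) • t_j = ((κ·n_b)/n_a) • (Σ_j ((b_jm_j)/n_b) • t_j)`. -/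
theorem stmt_15 (k : ℕ) (hk : 0 < k) (a : Fin k → ℤ)
    (ha : Finset.univ.gcd a = 1)
    (m d : Fin k → ℕ) (hm : ∀ j, 0 < m j) (hd : ∀ j, 0 < d j)
    (na : ℕ)
    (hna : na = Int.gcd (Finset.univ.gcd fun j => a j * (m j : ℤ))
      (∑ j, a j * (d j : ℤ)))
    (hna2 : 2 ≤ na)
    (b' : Fin k → ℤ) (hb' : ∀ j, b' j = a j - (na : ℤ) * (a j / (na : ℤ)))
    (κ : ℤ) (hκ : κ = Finset.univ.gcd b')
    (b : Fin k → ℤ) (hb : ∀ j, b j = b' j / κ)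
    (nb : ℕ)
    (hnb : nb = Int.gcd (Finset.univ.gcd fun j => b j * (m j : ℤ))
      (∑ j, b j * (d j : ℤ)))
    {A : Type*} [AddCommGroup A] (t : Fin k → A)
    (ht : ∀ j, (m j : ℤ) • t j = 0) :
    ∑ j, ((a j * (m j : ℤ)) / (na : ℤ)) • t j =
      ((κ * (nb : ℤ)) / (na : ℤ)) • ∑ j, ((b j * (m j : ℤ)) / (nb : ℤ)) • t j := by
  have hna2' : (2 : ℤ) ≤ (na : ℤ) := by exact_mod_cast hna2
  have hna0 : (na : ℤ) ≠ 0 := by omega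
  -- κ divides each b' j, and κ * b j = b' j
  have hκdvd : ∀ j, κ ∣ b' j := fun j => hκ ▸ Finset.gcd_dvd (Finset.mem_univ j)
  have hκb : ∀ j, κ * b j = b' j := fun j => by
    rw [hb j]; exact Int.mul_ediv_cancel' (hκdvd j)
  -- na divides each a j * m j and the sum Σ a j * d j
  have hnaG : ∀ j, (na : ℤ) ∣ a j * (m j : ℤ) := fun j => by
    rw [hna]
    exact (Int.gcd_dvd_left _ _).trans (Finset.gcd_dvd (Finset.mem_univ j))
  have hnaS : (na : ℤ) ∣ ∑ j, a j * (d j : ℤ) := by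
    rw [hna]; exact Int.gcd_dvd_right _ _
  -- na divides each b' j * m j
  have hnab' : ∀ j, (na : ℤ) ∣ b' j * (m j : ℤ) := fun j => by
    have h : b' j * (m j : ℤ) = a j * (m j : ℤ) - (na : ℤ) * (a j / (na : ℤ) * (m j : ℤ)) := by
      rw [hb' j]; ring
    rw [h]
    exact dvd_sub (hnaG j) (Dvd.intro _ rfl)
  -- na divides Σ b' j * d j
  have hnab'S : (na : ℤ) ∣ ∑ j, b' j * (d j : ℤ) := by
    have h : ∑ j, b' j * (d j : ℤ)
        = (∑ j, a j * (d j : ℤ)) - (na : ℤ) * ∑ j, a j / (na : ℤ) * (d j : ℤ) := by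
      rw [Finset.mul_sum, ← Finset.sum_sub_distrib]
      exact Finset.sum_congr rfl fun j _ => by rw [hb' j]; ring
    rw [h]
    exact dvd_sub hnaS (Dvd.intro _ rfl)
  -- nb divides each b j * m j
  have hnbG : ∀ j, (nb : ℤ) ∣ b j * (m j : ℤ) := fun j => by
    rw [hnb]
    exact (Int.gcd_dvd_left _ _).trans (Finset.gcd_dvd (Finset.mem_univ j))
  -- na divides κ * nb
  have hnaκnb : (na : ℤ) ∣ κ * (nb : ℤ) := by
    rw [hnb, Int.gcd_eq_gcd_ab, mul_add, ← mul_assoc, ← mul_assoc]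
    refine dvd_add (Dvd.dvd.mul_right ?_ _) (Dvd.dvd.mul_right ?_ _)
    · exact aux_finset_dvd _ _ _ _ fun j _ => by
        rw [← mul_assoc, hκb j]; exact hnab' j
    · rw [Finset.mul_sum]
      have h : ∑ j, κ * (b j * (d j : ℤ)) = ∑ j, b' j * (d j : ℤ) :=
        Finset.sum_congr rfl fun j _ => by rw [← mul_assoc, hκb j]
      rw [h]; exact hnab'S
  -- per-term identity
  rw [Finset.smul_sum]
  refine Finset.sum_congr rfl fun j _ => ?_
  rw [smul_smul]
  have hprod : (κ * (nb : ℤ)) / (na : ℤ) * (b j * (m j : ℤ) / (nb : ℤ))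
      = b' j * (m j : ℤ) / (na : ℤ) := by
    apply mul_left_cancel₀ hna0
    rw [← mul_assoc, Int.mul_ediv_cancel' hnaκnb, Int.mul_ediv_cancel' (hnab' j),
      mul_assoc, Int.mul_ediv_cancel' (hnbG j), ← mul_assoc, hκb j]
  rw [hprod]
  have hsplit : a j * (m j : ℤ) = b' j * (m j : ℤ) + (na : ℤ) * (a j / (na : ℤ) * (m j : ℤ)) := by
    rw [hb' j]; ring
  rw [hsplit, Int.add_mul_ediv_left _ _ hna0, add_smul, mul_smul, ht j, smul_zero, add_zero]
end
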